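/- arXiv:1910.05845 — 2 statements merged into one kernel-verified Lean document; each statement's English description precedes it below -/
import Mathlib

section
/- For t < 3, the tail probability in Lemma A.1 decays polynomially with exponent exceeding one: choosing h = t/(2 N^{1/2} α(1−α)) in the Chernoff bound yields P( S_N > Nα + (2/t) N^{1/2} log L ) ≤ exp{ −(1 − t/4) (log L)/(α(1−α)) + o(1) } = O(L^{−r}) as L → ∞ with R = o(L), where r = (1 − t/4)/(α(1−α)) > 1. -/
open MeasureTheory ProbabilityTheory Filter Set

noncomputable section

/-- The σ-field generated by the variables of the sequence with time indices `≤ k`. -/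
def sigPast {Ω : Type*} [MeasurableSpace Ω] (Y : ℤ → Ω → ℝ) (k : ℤ) : MeasurableSpace Ω :=
  ⨆ i ∈ Set.Iic k, MeasurableSpace.comap (Y i) inferInstance

/-- The σ-field generated by the variables of the sequence with time indices `≥ k`. -/
def sigFuture {Ω : Type*} [MeasurableSpace Ω] (Y : ℤ → Ω → ℝ) (k : ℤ) : MeasurableSpace Ω :=
  ⨆ i ∈ Set.Ici k, MeasurableSpace.comap (Y i) inferInstance

/-- The φ-mixing condition: `|P(E₂ ∣ E₁) − P(E₂)| ≤ φ(n)` for `E₁` in the past up to time `k`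
with `P(E₁) > 0` and `E₂` in the future from time `k + n` on. -/
def PhiMixing {Ω : Type*} [MeasurableSpace Ω] (μ : Measure Ω) (Y : ℤ → Ω → ℝ)
    (φ : ℕ → ℝ) : Prop :=
  ∀ (k : ℤ) (n : ℕ), 1 ≤ n →
    ∀ E₁, MeasurableSet[sigPast Y k] E₁ →
      ∀ E₂, MeasurableSet[sigFuture Y (k + n)] E₂ →
        0 < μ E₁ →
          |(μ (E₁ ∩ E₂)).toReal / (μ E₁).toReal - (μ E₂).toReal| ≤ φ n

/-- `log (1+u) ≤ u - u²/2 + u³` for `u ≥ 0`. -/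
lemma log_one_add_le_cubic {u : ℝ} (hu : 0 ≤ u) :
    Real.log (1 + u) ≤ u - u ^ 2 / 2 + u ^ 3 := by
  set f : ℝ → ℝ := fun v => v - v ^ 2 / 2 + v ^ 3 - Real.log (1 + v) with hf
  have hd : ∀ v : ℝ, 0 ≤ v → HasDerivAt f (1 - v + 3 * v ^ 2 - 1 / (1 + v)) v := by
    intro v hv
    have h1 : (0:ℝ) < 1 + v := by linarith
    have hlog : HasDerivAt (fun w : ℝ => Real.log (1 + w)) (1 / (1 + v)) v := by
      have := (Real.hasDerivAt_log h1.ne').comp v ((hasDerivAt_id v).const_add 1)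
      simpa [one_div, Function.comp_def] using this
    have hpoly : HasDerivAt (fun w : ℝ => w - w ^ 2 / 2 + w ^ 3)
        (1 - v + 3 * v ^ 2) v := by
      have h2 : HasDerivAt (fun w : ℝ => w ^ 2) (2 * v) v := by
        simpa using hasDerivAt_pow 2 v
      have h3 : HasDerivAt (fun w : ℝ => w ^ 3) (3 * v ^ 2) v := by
        simpa using hasDerivAt_pow 3 v
      have := ((hasDerivAt_id v).sub (h2.div_const 2)).add h3
      rw [show (1 - v + 3 * v ^ 2) = 1 - 2 * v / 2 + 3 * v ^ 2 by ring]
      exact this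
    exact hpoly.sub hlog
  have hmono : MonotoneOn f (Ici (0:ℝ)) := by
    refine monotoneOn_of_deriv_nonneg (convex_Ici 0) ?_ ?_ ?_
    · intro v hv
      exact (hd v hv).continuousAt.continuousWithinAt
    · intro v hv
      rw [interior_Ici] at hv
      exact (hd v (le_of_lt hv)).differentiableAt.differentiableWithinAt
    · intro v hv
      rw [interior_Ici] at hv
      rw [(hd v (le_of_lt hv)).deriv]
      have h1 : (0:ℝ) < 1 + v := by linarith [(mem_Ioi.mp hv).le]
      rw [sub_nonneg, div_le_iff₀ h1]
      nlinarith [(mem_Ioi.mp hv).le, sq_nonneg v]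
  have h0 : f 0 ≤ f u := hmono (by simp) hu hu
  have : f 0 = 0 := by simp [hf]
  rw [this] at h0
  simp only [hf] at h0
  linarith

/-- `exp x ≤ 1 + x + x²/2 + (2/9) x³` for `0 ≤ x ≤ 1`. -/
lemma exp_le_cubic {x : ℝ} (hx : 0 ≤ x) (hx1 : x ≤ 1) :
    Real.exp x ≤ 1 + x + x ^ 2 / 2 + (2/9) * x ^ 3 := by
  have h := Real.exp_bound (by rw [abs_of_nonneg hx]; exact hx1) (n := 3) (by norm_num)
  have hsum : ∑ i ∈ Finset.range 3, x ^ i / (Nat.factorial i) = 1 + x + x ^ 2 / 2 := by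
    norm_num [Finset.sum_range_succ, Nat.factorial]
  rw [hsum, abs_of_nonneg hx] at h
  have habs := (abs_le.mp h).2
  norm_num [Nat.factorial] at habs
  linarith

/-- Master bound: `log (1 + α (e^x − 1)) ≤ αx + α(1−α)x²/2 + 9x³` for `0 ≤ x ≤ 1`. -/
lemma log_bernoulli_mgf_bound {a x : ℝ} (ha : 0 < a) (ha1 : a < 1)
    (hx : 0 ≤ x) (hx1 : x ≤ 1) :
    Real.log (1 + a * (Real.exp x - 1)) ≤
      a * x + a * (1 - a) * x ^ 2 / 2 + 9 * x ^ 3 := by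
  set c : ℝ := Real.exp x - 1 with hc
  have hcx : x ≤ c := by
    have := Real.add_one_le_exp x
    simp only [hc]; linarith
  have hc0 : 0 ≤ c := le_trans hx hcx
  have hcub : c ≤ x + x ^ 2 / 2 + (2/9) * x ^ 3 := by
    have := exp_le_cubic hx hx1
    simp only [hc]; linarith
  clear_value c
  have hc2x : c ≤ 2 * x := by nlinarith
  have hu0 : 0 ≤ a * c := mul_nonneg ha.le hc0
  have hlog := log_one_add_le_cubic hu0
  have e1 : a * c ≤ a * x + a * x ^ 2 / 2 + (2/9) * x ^ 3 := by
    nlinarith [mul_le_mul_of_nonneg_left hcub ha.le,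
      mul_nonneg (sub_nonneg.mpr ha1.le) (pow_nonneg hx 3)]
  have hax : a * x ≤ a * c := mul_le_mul_of_nonneg_left hcx ha.le
  have e2 : (a * x) ^ 2 ≤ (a * c) ^ 2 := pow_le_pow_left₀ (mul_nonneg ha.le hx) hax 2
  have e3 : (a * c) ^ 3 ≤ 8 * x ^ 3 := by
    have h1 : (a * c) ^ 3 ≤ c ^ 3 := by
      refine pow_le_pow_left₀ (mul_nonneg ha.le hc0) ?_ 3
      nlinarith
    have h2 : c ^ 3 ≤ (2 * x) ^ 3 := pow_le_pow_left₀ hc0 hc2x 3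
    nlinarith
  have idq : (a * x) ^ 2 = a ^ 2 * x ^ 2 := by ring
  have idq2 : a * (1 - a) * x ^ 2 / 2 = a * x ^ 2 / 2 - a ^ 2 * x ^ 2 / 2 := by ring
  have hx3 : (0:ℝ) ≤ x ^ 3 := pow_nonneg hx 3
  calc Real.log (1 + a * c) ≤ a * c - (a * c) ^ 2 / 2 + (a * c) ^ 3 := hlog
    _ ≤ a * c - (a * x) ^ 2 / 2 + 8 * x ^ 3 := by linarith
    _ ≤ (a * x + a * x ^ 2 / 2 + (2/9) * x ^ 3) - (a * x) ^ 2 / 2 + 8 * x ^ 3 := by linarith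
    _ ≤ a * x + a * (1 - a) * x ^ 2 / 2 + 9 * x ^ 3 := by
        rw [idq, idq2] at *; linarith

/-- product of a fixed base to various real powers. -/
lemma ennreal_prod_rpow {ι : Type*} (s : Finset ι) (x : ENNReal) (hx0 : x ≠ 0) (hxt : x ≠ ⊤)
    (p : ι → ℝ) : ∏ i ∈ s, x ^ (p i) = x ^ (∑ i ∈ s, p i) := by
  classical
  induction s using Finset.induction with
  | empty => simp
  | insert _ _ hi ih =>
    rw [Finset.prod_insert hi, Finset.sum_insert hi, ih, ENNReal.rpow_add _ _ hx0 hxt]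

/-- rpow of a finite product in `ℝ≥0∞`, nonnegative exponent. -/
lemma ennreal_rpow_prod {ι : Type*} (s : Finset ι) (f : ι → ENNReal) {p : ℝ} (hp : 0 ≤ p) :
    (∏ i ∈ s, f i) ^ p = ∏ i ∈ s, (f i) ^ p := by
  classical
  induction s using Finset.induction with
  | empty => simp [ENNReal.one_rpow]
  | insert _ _ hi ih =>
    rw [Finset.prod_insert hi, Finset.prod_insert hi, ENNReal.mul_rpow_of_nonneg _ _ hp, ih]

/-- product of indicators is the indicator of the intersection. -/
lemma prod_indicator_biInter {Ω : Type*} (u : Finset ℕ) (A : ℕ → Set Ω) (ω : Ω) :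
    ∏ i ∈ u, (A i).indicator (1 : Ω → ENNReal) ω
      = (⋂ i ∈ u, A i).indicator (1 : Ω → ENNReal) ω := by
  classical
  induction u using Finset.induction with
  | empty => simp
  | @insert a u ha ih =>
    rw [Finset.prod_insert ha, ih, Finset.set_biInter_insert]
    simpa using (congrFun (Set.inter_indicator_one (s := A a) (t := ⋂ i ∈ u, A i)
      (M₀ := ENNReal)) ω).symm

lemma measurableSet_biInter' {Ω β : Type*} (m : MeasurableSpace Ω) (u : Finset β)
    {A : β → Set Ω} (h : ∀ i ∈ u, MeasurableSet[m] (A i)) :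
    MeasurableSet[m] (⋂ i ∈ u, A i) := by
  letI := m
  exact Finset.measurableSet_biInter u h

section Mixing

variable {Ω : Type*} [MeasurableSpace Ω] (μ : Measure Ω) [IsProbabilityMeasure μ]
  (Z : ℤ → Ω → ℝ) (φ : ℕ → ℝ) (α : ℝ)

lemma mixing_step (hmix : PhiMixing μ Z φ)
    (hmarg : ∀ i, (μ {ω | Z i ω = 1}).toReal = α)
    (k : ℤ) (g : ℕ) (hg : 1 ≤ g) (E₁ : Set Ω) (hE₁ : MeasurableSet[sigPast Z k] E₁) :
    μ (E₁ ∩ {ω | Z (k + g) ω = 1}) ≤ μ E₁ * ENNReal.ofReal (α + φ g) := by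
  set E₂ : Set Ω := {ω | Z (k + g) ω = 1} with hE₂def
  have hE₂ : MeasurableSet[sigFuture Z (k + g)] E₂ := by
    have hle : MeasurableSpace.comap (Z (k + g)) inferInstance ≤ sigFuture Z (k + g) := by
      refine le_iSup₂ (f := fun i (_ : i ∈ Set.Ici (k + (g:ℤ))) =>
        MeasurableSpace.comap (Z i) inferInstance) (k + g) Set.self_mem_Ici
    refine hle _ ⟨{1}, measurableSet_singleton 1, ?_⟩
    ext ω; simp [hE₂def]
  rcases eq_or_ne (μ E₁) 0 with h0 | h0
  · calc μ (E₁ ∩ E₂) ≤ μ E₁ := measure_mono Set.inter_subset_left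
      _ ≤ μ E₁ * ENNReal.ofReal (α + φ g) := by
          rw [h0]; simp
  · have hpos : 0 < μ E₁ := lt_of_le_of_ne zero_le (Ne.symm h0)
    have habs := hmix k g hg E₁ hE₁ E₂ hE₂ hpos
    have hα2 : (μ E₂).toReal = α := hmarg (k + g)
    rw [hα2] at habs
    have hq : 0 < (μ E₁).toReal := ENNReal.toReal_pos h0 (measure_ne_top μ E₁)
    have hdiv : (μ (E₁ ∩ E₂)).toReal / (μ E₁).toReal ≤ α + φ g := by
      have := (abs_le.mp habs).2
      linarith
    have hle : (μ (E₁ ∩ E₂)).toReal ≤ (μ E₁).toReal * (α + φ g) := by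
      rw [div_le_iff₀ hq] at hdiv
      linarith [hdiv]
    calc μ (E₁ ∩ E₂) = ENNReal.ofReal ((μ (E₁ ∩ E₂)).toReal) :=
          (ENNReal.ofReal_toReal (measure_ne_top μ _)).symm
      _ ≤ ENNReal.ofReal ((μ E₁).toReal * (α + φ g)) := ENNReal.ofReal_le_ofReal hle
      _ = ENNReal.ofReal ((μ E₁).toReal) * ENNReal.ofReal (α + φ g) :=
          ENNReal.ofReal_mul hq.le
      _ = μ E₁ * ENNReal.ofReal (α + φ g) := by
          rw [ENNReal.ofReal_toReal (measure_ne_top μ _)]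

lemma gap_inter_bound (hZmeas : ∀ i, Measurable (Z i)) (hmix : PhiMixing μ Z φ)
    (hmarg : ∀ i, (μ {ω | Z i ω = 1}).toReal = α)
    (g : ℕ) (hg : 1 ≤ g) :
    ∀ u : Finset ℕ, (∀ a ∈ u, ∀ b ∈ u, a < b → a + g ≤ b) →
      μ (⋂ i ∈ u, {ω | Z ((i:ℤ)+1) ω = 1}) ≤ ENNReal.ofReal (α + φ g) ^ u.card := by
  intro u
  induction u using Finset.induction_on_max with
  | empty => intro _; simp
  | insert a u ha ih =>
    intro hgap
    have hnotmem : a ∉ u := fun h => lt_irrefl a (ha a h)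
    have hgap' : ∀ a' ∈ u, ∀ b ∈ u, a' < b → a' + g ≤ b := fun a' ha' b hb hlt =>
      hgap a' (Finset.mem_insert_of_mem ha') b (Finset.mem_insert_of_mem hb) hlt
    set k : ℤ := (a:ℤ) + 1 - g with hk
    have hE₁ : MeasurableSet[sigPast Z k] (⋂ i ∈ u, {ω | Z ((i:ℤ)+1) ω = 1}) := by
      refine measurableSet_biInter' _ u (fun i hi => ?_)
      have hmem : ((i:ℤ)+1) ∈ Set.Iic k := by
        have h1 : i + g ≤ a :=
          hgap i (Finset.mem_insert_of_mem hi) a (Finset.mem_insert_self a u) (ha i hi)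
        simp only [Set.mem_Iic, hk]
        omega
      have hle : MeasurableSpace.comap (Z ((i:ℤ)+1)) inferInstance ≤ sigPast Z k :=
        le_iSup₂ (f := fun i' (_ : i' ∈ Set.Iic k) =>
          MeasurableSpace.comap (Z i') inferInstance) ((i:ℤ)+1) hmem
      refine hle _ ⟨{1}, measurableSet_singleton 1, ?_⟩
      ext ω; simp
    have hstep := mixing_step μ Z φ α hmix hmarg k g hg _ hE₁
    have hkg : k + (g:ℤ) = (a:ℤ) + 1 := by rw [hk]; ring
    rw [hkg] at hstep
    rw [Finset.set_biInter_insert, Set.inter_comm]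
    calc μ ((⋂ i ∈ u, {ω | Z ((i:ℤ)+1) ω = 1}) ∩ {ω | Z ((a:ℤ)+1) ω = 1})
        ≤ μ (⋂ i ∈ u, {ω | Z ((i:ℤ)+1) ω = 1}) * ENNReal.ofReal (α + φ g) := hstep
      _ ≤ ENNReal.ofReal (α + φ g) ^ u.card * ENNReal.ofReal (α + φ g) :=
          mul_le_mul_left (ih hgap') _
      _ = ENNReal.ofReal (α + φ g) ^ (insert a u).card := by
          rw [Finset.card_insert_of_notMem hnotmem, pow_succ]

end Mixing

section Row

variable {Ω : Type*} [MeasurableSpace Ω] (μ : Measure Ω) [IsProbabilityMeasure μ]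
  (Z : ℤ → Ω → ℝ) (φ : ℕ → ℝ) (α : ℝ)

lemma row_mgf_bound (hZmeas : ∀ i, Measurable (Z i)) (hZ01 : ∀ i ω, Z i ω = 0 ∨ Z i ω = 1)
    (hmix : PhiMixing μ Z φ) (hφ0 : ∀ n, 0 ≤ φ n)
    (hmarg : ∀ i, (μ {ω | Z i ω = 1}).toReal = α) (hα : 0 ≤ α)
    (L g : ℕ) (hg : 1 ≤ g) (h : ℝ) (hh : 0 ≤ h) :
    mgf (fun ω => ∑ i ∈ Finset.range L, Z ((i:ℤ)+1) ω) μ h ≤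
      (1 + (Real.exp ((g:ℝ)*h) - 1) * (α + φ g)) ^ ((L:ℝ)/(g:ℝ)) := by
  classical
  have hg0 : (0:ℝ) < (g:ℝ) := by exact_mod_cast hg
  have hgn0 : g ≠ 0 := by omega
  set q : ℝ := α + φ g with hqdef
  have hq0 : 0 ≤ q := add_nonneg hα (hφ0 g)
  set c : ℝ := Real.exp ((g:ℝ)*h) - 1 with hcdef
  have hc0 : 0 ≤ c := by
    have : (1:ℝ) ≤ Real.exp ((g:ℝ)*h) := Real.one_le_exp (mul_nonneg hg0.le hh)
    simp only [hcdef]; linarith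
  set C : ENNReal := ENNReal.ofReal c with hCdef
  set Q : ENNReal := ENNReal.ofReal q with hQdef
  set Xe : ENNReal := 1 + C * Q with hXedef
  have hXe_top : Xe ≠ ⊤ := by
    simp only [hXedef]
    exact ENNReal.add_ne_top.mpr ⟨ENNReal.one_ne_top,
      ENNReal.mul_ne_top ENNReal.ofReal_ne_top ENNReal.ofReal_ne_top⟩
  have hXe0 : Xe ≠ 0 := by
    have h1 : (1:ENNReal) ≤ Xe := le_self_add
    exact fun h0 => by simp [h0] at h1
  set A : ℕ → Set Ω := fun i => {ω | Z ((i:ℤ)+1) ω = 1} with hAdef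
  have hA : ∀ i : ℕ, MeasurableSet (A i) := by
    intro i
    have heq : A i = Z ((i:ℤ)+1) ⁻¹' {1} := by ext ω; simp [hAdef]
    rw [heq]
    exact (hZmeas _) (measurableSet_singleton 1)
  set F : ℕ → Ω → ENNReal := fun i ω => ENNReal.ofReal (Real.exp ((g:ℝ)*h * Z ((i:ℤ)+1) ω))
    with hFdef
  have hFmeas : ∀ i, Measurable (F i) := fun i =>
    (((hZmeas _).const_mul _).exp).ennreal_ofReal
  have hFeq : ∀ i ω, F i ω = 1 + C * (A i).indicator 1 ω := by
    intro i ω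
    rcases hZ01 ((i:ℤ)+1) ω with hz | hz
    · have hnm : ω ∉ A i := by simp [hAdef, hz]
      rw [hFdef]
      simp [hz, Set.indicator_of_notMem hnm]
    · have hm : ω ∈ A i := by simp [hAdef, hz]
      simp only [hFdef, hz, mul_one, Set.indicator_of_mem hm, Pi.one_apply]
      rw [show Real.exp ((g:ℝ)*h) = 1 + c by simp only [hcdef]; ring,
        ENNReal.ofReal_add zero_le_one hc0, ENNReal.ofReal_one]
  -- the per-class bound
  have class_bound : ∀ s : Finset ℕ, (∀ a ∈ s, ∀ b ∈ s, a < b → a + g ≤ b) →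
      ∫⁻ ω, ∏ i ∈ s, F i ω ∂μ ≤ Xe ^ s.card := by
    intro s hs
    have hAIn : ∀ u : Finset ℕ, MeasurableSet (⋂ i ∈ u, A i) := fun u =>
      Finset.measurableSet_biInter u (fun i _ => hA i)
    have hpt : ∀ ω, ∏ i ∈ s, F i ω
        = ∑ u ∈ s.powerset, C ^ u.card * (⋂ i ∈ u, A i).indicator 1 ω := by
      intro ω
      rw [Finset.prod_congr rfl (fun i (_ : i ∈ s) => hFeq i ω)]
      have hcomm : ∀ i ∈ s, (1 + C * (A i).indicator 1 ω)
          = (fun j => C * (A j).indicator 1 ω) i + (fun _ => (1:ENNReal)) i :=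
        fun i _ => add_comm _ _
      rw [Finset.prod_congr rfl hcomm, Finset.prod_add]
      refine Finset.sum_congr rfl (fun u _ => ?_)
      rw [Finset.prod_const_one, mul_one, Finset.prod_mul_distrib, Finset.prod_const,
        prod_indicator_biInter u A ω]
    calc ∫⁻ ω, ∏ i ∈ s, F i ω ∂μ
        = ∑ u ∈ s.powerset, C ^ u.card * μ (⋂ i ∈ u, A i) := by
          rw [lintegral_congr hpt, lintegral_finset_sum _
            (fun u _ => ((measurable_one.indicator (hAIn u)).const_mul _))]
          refine Finset.sum_congr rfl (fun u _ => ?_)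
          rw [lintegral_const_mul _ (measurable_one.indicator (hAIn u)),
            lintegral_indicator_one (hAIn u)]
      _ ≤ ∑ u ∈ s.powerset, C ^ u.card * Q ^ u.card := by
          refine Finset.sum_le_sum (fun u hu => ?_)
          refine mul_le_mul_right ?_ _
          refine gap_inter_bound μ Z φ α hZmeas hmix hmarg g hg u ?_
          intro a hau b hbu hab
          exact hs a (Finset.mem_powerset.mp hu hau) b (Finset.mem_powerset.mp hu hbu) hab
      _ = Xe ^ s.card := by
          have hterm : ∀ u ∈ s.powerset, C ^ u.card * Q ^ u.card
              = (∏ _i ∈ u, C * Q) * ∏ _i ∈ s \ u, (1:ENNReal) := by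
            intro u _
            simp [Finset.prod_const, mul_pow]
          rw [Finset.sum_congr rfl hterm, ← Finset.prod_add]
          rw [Finset.prod_congr rfl (fun i (_ : i ∈ s) => add_comm (C * Q) 1),
            Finset.prod_const]
  -- Hölder blocking
  have hmaps : ∀ i ∈ Finset.range L, i % g ∈ Finset.range g :=
    fun i _ => Finset.mem_range.mpr (Nat.mod_lt i (by omega))
  have main : ∫⁻ ω, ENNReal.ofReal (Real.exp (h * ∑ i ∈ Finset.range L, Z ((i:ℤ)+1) ω)) ∂μ
      ≤ Xe ^ ((L:ℝ)/(g:ℝ)) := by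
    have hpt2 : ∀ ω, ENNReal.ofReal (Real.exp (h * ∑ i ∈ Finset.range L, Z ((i:ℤ)+1) ω))
        = ∏ r ∈ Finset.range g,
            (fun ω' => ∏ i ∈ (Finset.range L).filter (fun i => i % g = r), F i ω') ω
              ^ ((1:ℝ)/(g:ℝ)) := by
      intro ω
      rw [Finset.mul_sum, Real.exp_sum,
        ENNReal.ofReal_prod_of_nonneg (fun i _ => (Real.exp_pos _).le)]
      have hterm : ∀ i ∈ Finset.range L,
          ENNReal.ofReal (Real.exp (h * Z ((i:ℤ)+1) ω)) = F i ω ^ ((1:ℝ)/(g:ℝ)) := by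
        intro i _
        simp only [hFdef]
        rw [ENNReal.ofReal_rpow_of_pos (Real.exp_pos _)]
        congr 1
        rw [← Real.exp_mul]
        congr 1
        field_simp
      rw [Finset.prod_congr rfl hterm,
        ← Finset.prod_fiberwise_of_maps_to hmaps (fun i => F i ω ^ ((1:ℝ)/(g:ℝ)))]
      refine Finset.prod_congr rfl (fun r _ => ?_)
      simp only
      rw [ennreal_rpow_prod _ _ (by positivity)]
    rw [lintegral_congr hpt2]
    calc ∫⁻ ω, ∏ r ∈ Finset.range g,
          (fun ω' => ∏ i ∈ (Finset.range L).filter (fun i => i % g = r), F i ω') ω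
            ^ ((1:ℝ)/(g:ℝ)) ∂μ
        ≤ ∏ r ∈ Finset.range g,
            (∫⁻ ω, ∏ i ∈ (Finset.range L).filter (fun i => i % g = r), F i ω ∂μ)
              ^ ((1:ℝ)/(g:ℝ)) := by
          refine ENNReal.lintegral_prod_norm_pow_le _ ?_ ?_ ?_
          · exact fun r _ => (Finset.measurable_prod _ (fun i _ => hFmeas i)).aemeasurable
          · rw [Finset.sum_const, Finset.card_range, nsmul_eq_mul]
            field_simp
          · exact fun r _ => by positivity
      _ ≤ ∏ r ∈ Finset.range g,
            (Xe ^ ((Finset.range L).filter (fun i => i % g = r)).card) ^ ((1:ℝ)/(g:ℝ)) := by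
          refine Finset.prod_le_prod' (fun r _ => ?_)
          refine ENNReal.rpow_le_rpow ?_ (by positivity)
          refine class_bound _ (fun a hau b hbu hab => ?_)
          have ha' := Finset.mem_filter.mp hau
          have hb' := Finset.mem_filter.mp hbu
          have hmod : a % g = b % g := by rw [ha'.2, hb'.2]
          have hdvd : g ∣ b - a := (Nat.modEq_iff_dvd' hab.le).mp hmod
          have hpos : 0 < b - a := by omega
          have := Nat.le_of_dvd hpos hdvd
          omega
      _ = Xe ^ ((L:ℝ)/(g:ℝ)) := by
          have h1 : ∀ r ∈ Finset.range g,
              (Xe ^ ((Finset.range L).filter (fun i => i % g = r)).card) ^ ((1:ℝ)/(g:ℝ))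
                = Xe ^ ((((Finset.range L).filter (fun i => i % g = r)).card : ℝ)/(g:ℝ)) := by
            intro r _
            rw [← ENNReal.rpow_natCast Xe, ← ENNReal.rpow_mul]
            congr 1
            field_simp
          rw [Finset.prod_congr rfl h1, ennreal_prod_rpow _ _ hXe0 hXe_top]
          congr 1
          rw [← Finset.sum_div]
          congr 1
          have := Finset.card_eq_sum_card_fiberwise hmaps
          rw [Finset.card_range] at this
          rw [← Nat.cast_sum, ← this]
  -- convert to the real mgf statement
  have hSmeas : Measurable (fun ω => ∑ i ∈ Finset.range L, Z ((i:ℤ)+1) ω) :=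
    Finset.measurable_sum _ (fun i _ => hZmeas _)
  have hasm : AEStronglyMeasurable (fun ω => Real.exp (h * ∑ i ∈ Finset.range L, Z ((i:ℤ)+1) ω)) μ :=
    ((hSmeas.const_mul h).exp).aestronglyMeasurable
  rw [mgf, integral_eq_lintegral_of_nonneg_ae (ae_of_all _ (fun ω => (Real.exp_pos _).le)) hasm]
  have hXetoReal : Xe.toReal = 1 + c * q := by
    rw [hXedef, ENNReal.toReal_add ENNReal.one_ne_top
      (ENNReal.mul_ne_top ENNReal.ofReal_ne_top ENNReal.ofReal_ne_top), ENNReal.toReal_one,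
      ENNReal.toReal_mul, ENNReal.toReal_ofReal hc0, ENNReal.toReal_ofReal hq0]
  calc (∫⁻ ω, ENNReal.ofReal (Real.exp (h * ∑ i ∈ Finset.range L, Z ((i:ℤ)+1) ω)) ∂μ).toReal
      ≤ (Xe ^ ((L:ℝ)/(g:ℝ))).toReal := by
        refine ENNReal.toReal_mono ?_ main
        exact ENNReal.rpow_ne_top_of_nonneg (by positivity) hXe_top
    _ = (1 + c * q) ^ ((L:ℝ)/(g:ℝ)) := by
        rw [← ENNReal.toReal_rpow, hXetoReal]

end Row


/-- Conditions on the mixing coefficients: `1 ≥ φ(1) ≥ φ(2) ≥ ⋯ ≥ 0`, `φ(n) → 0`, and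
`∑ₙ e^{tn} φ(n) < ∞` for the given `t > 0`. -/
def MixingCoef (φ : ℕ → ℝ) (t : ℝ) : Prop :=
  (∀ n, 0 ≤ φ n) ∧ (∀ n, φ n ≤ 1) ∧ (∀ n, φ (n + 1) ≤ φ n) ∧
    Filter.Tendsto φ Filter.atTop (nhds 0) ∧ 0 < t ∧
      Summable (fun n : ℕ => Real.exp (t * n) * φ n)

/-- Strict stationarity of a doubly infinite sequence of real random variables. -/
def Stationary {Ω : Type*} [MeasurableSpace Ω] (μ : Measure Ω) (Y : ℤ → Ω → ℝ) : Prop :=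
  ∀ k : ℤ, Measure.map (fun ω (i : ℤ) => Y (i + k) ω) μ = Measure.map (fun ω (i : ℤ) => Y i ω) μ

/-- Total pooled sample size `N = R · L`. -/
def NN (R : ℕ → ℕ) (L : ℕ) : ℕ := R L * L


/-- The pooled sum `S_N = ∑_{j=1}^R ∑_{i=1}^L Y_{ji}`. -/
def SNsum {Ω : Type*} (Y : ℕ → ℤ → Ω → ℝ) (R : ℕ → ℕ) (L : ℕ) (ω : Ω) : ℝ :=
  ∑ j ∈ Finset.range (R L), ∑ i ∈ Finset.range L, Y j ((i : ℤ) + 1) ω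

set_option maxHeartbeats 2000000 in
/-- **Tail-probability bound in Lemma A.1.** For `t < 3`, the Chernoff bound with
`h = t/(2N^{1/2}α(1−α))` yields
`P(S_N > Nα + (2/t)N^{1/2} log L) ≤ exp{−(1 − t/4) log L/(α(1−α)) + o(1)} = O(L^{−r})`
as `L → ∞` with `R = o(L)`, where `r = (1 − t/4)/(α(1−α)) > 1`. -/
theorem lemma_A1_tail_probability_bound
    {Ω : Type*} [MeasurableSpace Ω] (μ : Measure Ω) [IsProbabilityMeasure μ]
    (Y : ℕ → ℤ → Ω → ℝ) (R : ℕ → ℕ) (φ : ℕ → ℝ) (t : ℝ) (α : ℝ)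
    -- the `Y_{ji}` are measurable and {0,1}-valued
    (hmeas : ∀ j i, Measurable (Y j i))
    (h01 : ∀ j i ω, Y j i ω = 0 ∨ Y j i ω = 1)
    -- the rows (replications) are mutually independent …
    (hindep : iIndepFun (fun j ω (i : ℤ) => Y j i ω) μ)
    -- … each row is a stationary sequence …
    (hstat : ∀ j, Stationary μ (Y j))
    -- … of φ-mixing random variables, with coefficients satisfying (6)
    (hmix : ∀ j, PhiMixing μ (Y j) φ)
    (hφ : MixingCoef φ t)
    -- common marginal distribution `P(Y_{ji} = 1) = α`
    (hmarg : ∀ j i, (μ {ω | Y j i ω = 1}).toReal = α)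
    (hα : 0 < α) (hα1 : α < 1)
    -- `N = R·L` with `R = o(L)` as `L → ∞`
    (hR1 : ∀ L, 1 ≤ R L)
    (hRo : (fun L => (R L : ℝ)) =o[atTop] (fun L => (L : ℝ)))
    (ht3 : t < 3) :
    1 < (1 - t / 4) / (α * (1 - α)) ∧
    ∃ e : ℕ → ℝ, Tendsto e atTop (nhds 0) ∧
      (∀ᶠ L : ℕ in atTop,
        (μ {ω | (NN R L : ℝ) * α + (2 / t) * (NN R L : ℝ) ^ ((1 : ℝ) / 2) * Real.log L <
            SNsum Y R L ω}).toReal ≤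
          Real.exp (-(1 - t / 4) * Real.log L / (α * (1 - α)) + e L)) ∧
      ∃ C : ℝ, ∀ᶠ L : ℕ in atTop,
        (μ {ω | (NN R L : ℝ) * α + (2 / t) * (NN R L : ℝ) ^ ((1 : ℝ) / 2) * Real.log L <
            SNsum Y R L ω}).toReal ≤
          C * (L : ℝ) ^ (-((1 - t / 4) / (α * (1 - α)))) := by
  classical
  obtain ⟨hφ0, hφ1, hφmono, hφtend, ht0, hφsum⟩ := hφ
  set β : ℝ := α * (1 - α) with hβdef
  have hβ : 0 < β := by nlinarith
  have hβ4 : β ≤ 1/4 := by nlinarith [sq_nonneg (2*α - 1)]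
  -- bound on mixing coefficients
  obtain ⟨K, hK⟩ : ∃ K : ℝ, ∀ n : ℕ, Real.exp (t * n) * φ n ≤ K := by
    obtain ⟨K, hK⟩ := (hφsum.tendsto_atTop_zero).bddAbove_range
    exact ⟨K, fun n => hK (Set.mem_range_self n)⟩
  have hK0 : 0 ≤ K := le_trans (by simpa using (hφ0 0)) (by simpa using hK 0)
  have hφK : ∀ n : ℕ, φ n ≤ K * Real.exp (-(t * n)) := by
    intro n
    have h1 := hK n
    have h2 : Real.exp (-(t*n)) * (Real.exp (t*n) * φ n) ≤ Real.exp (-(t*n)) * K :=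
      mul_le_mul_of_nonneg_left h1 (Real.exp_pos _).le
    rw [← mul_assoc, ← Real.exp_add] at h2
    simp only [neg_add_cancel, Real.exp_zero, one_mul] at h2
    linarith [h2]
  -- the blocking parameters
  set gg : ℕ → ℕ := fun L => max 1 ⌈Real.log L / t⌉₊ with hggdef
  set sN : ℕ → ℝ := fun L => Real.sqrt (NN R L) with hsNdef
  set ch : ℕ → ℝ := fun L => t / (2 * sN L * β) with hchdef
  -- eventual real-variable facts
  have hEV : ∀ᶠ x : ℝ in atTop,
      (Real.log x / t + 1 ≤ x ^ ((1:ℝ)/8)) ∧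
      ((t/(2*β)) * x ^ (-(1:ℝ)/4) ≤ 1) ∧
      ((t/(2*β)) * x ^ (-(3:ℝ)/8) ≤ 1) ∧
      (t^2/(8*β) + 9*t^2/(4*β^2) + t*K/β ≤ t/(8*β) * Real.log x) := by
    have hP1 : ∀ᶠ x : ℝ in atTop, Real.log x / t + 1 ≤ x ^ ((1:ℝ)/8) := by
      have hlo : (fun x : ℝ => Real.log x / t + 1) =o[atTop] fun x : ℝ => x ^ ((1:ℝ)/8) := by
        have h1 : (fun x : ℝ => Real.log x / t) =o[atTop] fun x : ℝ => x ^ ((1:ℝ)/8) := by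
          simpa [div_eq_mul_inv, mul_comm] using
            (isLittleO_log_rpow_atTop (by norm_num : (0:ℝ) < 1/8)).const_mul_left t⁻¹
        have h2 : (fun _ : ℝ => (1:ℝ)) =o[atTop] fun x : ℝ => x ^ ((1:ℝ)/8) := by
          refine Asymptotics.isLittleO_const_left.mpr (Or.inr ?_)
          exact tendsto_norm_atTop_atTop.comp (tendsto_rpow_atTop (by norm_num : (0:ℝ) < 1/8))
        exact h1.add h2
      have := hlo.bound (by norm_num : (0:ℝ) < 1)
      filter_upwards [this, eventually_ge_atTop (1:ℝ)] with x hx hx1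
      have h0 : (0:ℝ) ≤ x := by linarith
      have hlog : 0 ≤ Real.log x := Real.log_nonneg hx1
      calc Real.log x / t + 1 ≤ ‖Real.log x / t + 1‖ := le_abs_self _
        _ ≤ 1 * ‖x ^ ((1:ℝ)/8)‖ := hx
        _ = x ^ ((1:ℝ)/8) := by rw [one_mul, Real.norm_of_nonneg (Real.rpow_nonneg h0 _)]
    have hP2 : ∀ᶠ x : ℝ in atTop, (t/(2*β)) * x ^ (-(1:ℝ)/4) ≤ 1 := by
      have : Tendsto (fun x : ℝ => (t/(2*β)) * x ^ (-(1:ℝ)/4)) atTop (nhds 0) := by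
        have h := (tendsto_rpow_neg_atTop (by norm_num : (0:ℝ) < 1/4)).const_mul (t/(2*β))
        simpa [neg_div] using h
      filter_upwards [this.eventually (eventually_le_nhds (by norm_num : (0:ℝ) < 1))] with x hx
      exact hx
    have hP3 : ∀ᶠ x : ℝ in atTop, (t/(2*β)) * x ^ (-(3:ℝ)/8) ≤ 1 := by
      have : Tendsto (fun x : ℝ => (t/(2*β)) * x ^ (-(3:ℝ)/8)) atTop (nhds 0) := by
        have h := (tendsto_rpow_neg_atTop (by norm_num : (0:ℝ) < 3/8)).const_mul (t/(2*β))
        simpa [neg_div] using h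
      filter_upwards [this.eventually (eventually_le_nhds (by norm_num : (0:ℝ) < 1))] with x hx
      exact hx
    have hP4 : ∀ᶠ x : ℝ in atTop,
        t^2/(8*β) + 9*t^2/(4*β^2) + t*K/β ≤ t/(8*β) * Real.log x := by
      have hlog := Real.tendsto_log_atTop
      have := hlog.eventually_ge_atTop ((t^2/(8*β) + 9*t^2/(4*β^2) + t*K/β) / (t/(8*β)))
      filter_upwards [this] with x hx
      have htb : 0 < t/(8*β) := by positivity
      rw [div_le_iff₀ htb] at hx
      linarith [hx]
    filter_upwards [hP1, hP2, hP3, hP4] with x h1 h2 h3 h4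
    exact ⟨h1, h2, h3, h4⟩
  -- upper/lower bounds for the blocking parameter
  have hg1 : ∀ L, 1 ≤ gg L := fun L => le_max_left _ _
  have hg_lb : ∀ L : ℕ, Real.log L / t ≤ (gg L : ℝ) := by
    intro L
    have h2 : (⌈Real.log L / t⌉₊ : ℕ) ≤ gg L := le_max_right _ _
    calc Real.log L / t ≤ (⌈Real.log L / t⌉₊ : ℝ) := Nat.le_ceil _
      _ ≤ (gg L : ℝ) := by exact_mod_cast h2
  have hg_ub : ∀ L : ℕ, 1 ≤ L → (gg L : ℝ) ≤ Real.log L / t + 1 := by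
    intro L hL
    have hlog : 0 ≤ Real.log L := Real.log_nonneg (by exact_mod_cast hL)
    have hz : 0 ≤ Real.log L / t := div_nonneg hlog ht0.le
    have hceil : (⌈Real.log L / t⌉₊ : ℝ) < Real.log L / t + 1 := Nat.ceil_lt_add_one hz
    simp only [hggdef]
    rw [Nat.cast_max]
    exact max_le (by norm_num; linarith only [hz]) hceil.le
  -- the central eventual bound
  have key : ∀ᶠ L : ℕ in atTop,
      (μ {ω | (NN R L : ℝ) * α + (2 / t) * (NN R L : ℝ) ^ ((1 : ℝ) / 2) * Real.log L <
          SNsum Y R L ω}).toReal ≤ Real.exp (-(1 - t / 4) * Real.log L / β) := by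
    have hRo1 := hRo.bound (by norm_num : (0:ℝ) < 1)
    filter_upwards [eventually_ge_atTop 3, hRo1,
      tendsto_natCast_atTop_atTop.eventually hEV] with L hL3 hRL hEVL
    obtain ⟨hP1, hP2, hP3, hP4⟩ := hEVL
    have hL1 : (1:ℝ) ≤ (L:ℝ) := by exact_mod_cast (by omega : 1 ≤ L)
    have hLpos : (0:ℝ) < L := lt_of_lt_of_le one_pos hL1
    have hRL' : (R L : ℝ) ≤ L := by
      simpa [Real.norm_natCast] using hRL
    set N : ℕ := NN R L with hNdef
    have hN_RL : (N:ℝ) = (R L : ℝ) * L := by rw [hNdef, NN]; push_cast; ring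
    have hNL : (L:ℝ) ≤ N := by
      rw [hN_RL]
      exact le_mul_of_one_le_left (Nat.cast_nonneg L) (by exact_mod_cast hR1 L)
    have hN1 : (1:ℝ) ≤ N := le_trans hL1 hNL
    have hNpos : (0:ℝ) < N := lt_of_lt_of_le one_pos hN1
    have hsNval : sN L = Real.sqrt N := by rw [hsNdef]
    have hsNpos : 0 < sN L := by rw [hsNval]; exact Real.sqrt_pos.mpr hNpos
    have hsq : sN L ^ 2 = (N:ℝ) := by rw [hsNval]; exact Real.sq_sqrt hNpos.le
    set g : ℕ := gg L with hgdef
    have hg1' : 1 ≤ g := hg1 L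
    have hgR : (0:ℝ) < g := by exact_mod_cast hg1'
    have hgne : (g:ℝ) ≠ 0 := ne_of_gt hgR
    set h : ℝ := ch L with hhdef
    have hhval : h = t / (2 * sN L * β) := by rw [hhdef, hchdef]
    have hhpos : 0 < h := by rw [hhval]; positivity
    set x : ℝ := (g:ℝ) * h with hxdef
    have hx0 : 0 ≤ x := by positivity
    have hsL : Real.sqrt L ≤ sN L := by
      rw [hsNval]; exact Real.sqrt_le_sqrt hNL
    have hsLpos : 0 < Real.sqrt L := Real.sqrt_pos.mpr hLpos
    have hhle : h ≤ t / (2 * Real.sqrt L * β) := by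
      rw [hhval]
      refine div_le_div_of_nonneg_left ht0.le (by positivity) ?_
      exact mul_le_mul_of_nonneg_right (mul_le_mul_of_nonneg_left hsL (by norm_num)) hβ.le
    have hgle : (g:ℝ) ≤ (L:ℝ) ^ ((1:ℝ)/8) := le_trans (hg_ub L (by omega)) hP1
    -- rpow computations
    have e1 : ((L:ℝ) ^ ((1:ℝ)/8))^2 = (L:ℝ)^((1:ℝ)/4) := by
      rw [← Real.rpow_natCast ((L:ℝ) ^ ((1:ℝ)/8)) 2, ← Real.rpow_mul hLpos.le]
      norm_num
    have e2 : ((L:ℝ) ^ ((1:ℝ)/8))^2 * (t / (2 * Real.sqrt L * β))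
        = (t/(2*β)) * (L:ℝ)^(-(1:ℝ)/4) := by
      rw [e1, Real.sqrt_eq_rpow]
      rw [show (-(1:ℝ)/4) = (1:ℝ)/4 - (1:ℝ)/2 by norm_num, Real.rpow_sub hLpos]
      have hr2 : (L:ℝ)^((1:ℝ)/2) ≠ 0 := by positivity
      field_simp
    have e3 : ((L:ℝ) ^ ((1:ℝ)/8)) * (t / (2 * Real.sqrt L * β))
        = (t/(2*β)) * (L:ℝ)^(-(3:ℝ)/8) := by
      rw [Real.sqrt_eq_rpow]
      rw [show (-(3:ℝ)/8) = (1:ℝ)/8 - (1:ℝ)/2 by norm_num, Real.rpow_sub hLpos]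
      have hr2 : (L:ℝ)^((1:ℝ)/2) ≠ 0 := by positivity
      field_simp
    have hg2h : (g:ℝ)^2 * h ≤ 1 := by
      have hb : (g:ℝ)^2 * h ≤ ((L:ℝ) ^ ((1:ℝ)/8))^2 * (t / (2 * Real.sqrt L * β)) :=
        mul_le_mul (pow_le_pow_left₀ hgR.le hgle 2) hhle hhpos.le (by positivity)
      calc (g:ℝ)^2 * h ≤ ((L:ℝ) ^ ((1:ℝ)/8))^2 * (t / (2 * Real.sqrt L * β)) := hb
        _ = (t/(2*β)) * (L:ℝ)^(-(1:ℝ)/4) := e2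
        _ ≤ 1 := hP2
    have hx1 : x ≤ 1 := by
      have hb : x ≤ ((L:ℝ) ^ ((1:ℝ)/8)) * (t / (2 * Real.sqrt L * β)) := by
        rw [hxdef]
        exact mul_le_mul hgle hhle hhpos.le (by positivity)
      calc x ≤ ((L:ℝ) ^ ((1:ℝ)/8)) * (t / (2 * Real.sqrt L * β)) := hb
        _ = (t/(2*β)) * (L:ℝ)^(-(3:ℝ)/8) := e3
        _ ≤ 1 := hP3
    -- MGF data
    set c : ℝ := Real.exp ((g:ℝ)*h) - 1 with hcdef
    have hc_exp : c = Real.exp x - 1 := by rw [hcdef, hxdef]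
    have hc0 : 0 ≤ c := by
      rw [hc_exp]
      linarith only [Real.one_le_exp hx0]
    have hx2 : x^2 ≤ x := by
      have h' := mul_le_mul_of_nonneg_left hx1 hx0
      calc x^2 = x*x := by ring
        _ ≤ x*1 := h'
        _ = x := mul_one x
    have hx3 : x^3 ≤ x := by
      calc x^3 = x^2*x := by ring
        _ ≤ x*x := mul_le_mul_of_nonneg_right hx2 hx0
        _ = x^2 := by ring
        _ ≤ x := hx2
    have hc2x : c ≤ 2*x := by
      rw [hc_exp]
      linarith only [exp_le_cubic hx0 hx1, hx2, hx3, hx0]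
    set q : ℝ := α + φ g with hqdef
    have hq0 : 0 ≤ q := add_nonneg hα.le (hφ0 g)
    set X : ℝ := 1 + c * q with hXdef
    have hX1 : (1:ℝ) ≤ X := by
      rw [hXdef]; linarith only [mul_nonneg hc0 hq0]
    have hXpos : (0:ℝ) < X := lt_of_lt_of_le one_pos hX1
    -- measurability and integrability of S
    have hSmeas : Measurable (SNsum Y R L) := by
      apply Finset.measurable_sum
      intro j _
      exact Finset.measurable_sum _ (fun i _ => hmeas j _)
    have hSbound : ∀ ω, SNsum Y R L ω ≤ (N:ℝ) := by
      intro ω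
      have hb : ∀ j ∈ Finset.range (R L), ∑ i ∈ Finset.range L, Y j ((i:ℤ)+1) ω ≤ (L:ℝ) := by
        intro j _
        calc ∑ i ∈ Finset.range L, Y j ((i:ℤ)+1) ω ≤ ∑ _i ∈ Finset.range L, (1:ℝ) :=
              Finset.sum_le_sum (fun i _ => by rcases h01 j ((i:ℤ)+1) ω with hz | hz <;>
                rw [hz] <;> norm_num)
          _ = (L:ℝ) := by simp
      calc SNsum Y R L ω ≤ ∑ _j ∈ Finset.range (R L), (L:ℝ) := Finset.sum_le_sum hb
        _ = (R L : ℝ) * L := by simp [mul_comm]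
        _ = (N:ℝ) := hN_RL.symm
    have hint : Integrable (fun ω => Real.exp (h * SNsum Y R L ω)) μ := by
      refine ⟨((hSmeas.const_mul h).exp).aestronglyMeasurable, ?_⟩
      refine HasFiniteIntegral.of_bounded (C := Real.exp (h * N)) (ae_of_all _ fun ω => ?_)
      rw [Real.norm_eq_abs, Real.abs_exp]
      exact Real.exp_le_exp.mpr (mul_le_mul_of_nonneg_left (hSbound ω) hhpos.le)
    -- Chernoff
    set a : ℝ := (N:ℝ)*α + (2/t) * sN L * Real.log L with hadef
    have hgub' : (g:ℝ) ≤ Real.log L / t + 1 := hg_ub L (by omega)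
    have hglb' : Real.log L / t ≤ (g:ℝ) := hg_lb L
    have hXexpr : X = 1 + (Real.exp ((g:ℝ)*h) - 1) * (α + φ g) := by
      rw [hXdef, hcdef, hqdef]
    have hevrw : (N : ℝ) ^ ((1:ℝ)/2) = sN L := by
      rw [hsNval, Real.sqrt_eq_rpow]
    clear_value N g h x c q X a
    have hcher := measure_ge_le_exp_mul_mgf (X := SNsum Y R L) (μ := μ) a hhpos.le hint
    -- mgf factorization over rows
    have hrows : iIndepFun
        (fun j ω => ∑ i ∈ Finset.range L, Y j ((i:ℤ)+1) ω) μ :=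
      hindep.comp (fun _ (f : ℤ → ℝ) => ∑ i ∈ Finset.range L, f ((i:ℤ)+1))
        (fun _ => Finset.measurable_sum _ (fun i _ => measurable_pi_apply _))
    have hmgfsum : mgf (SNsum Y R L) μ h = ∏ j ∈ Finset.range (R L),
        mgf (fun ω => ∑ i ∈ Finset.range L, Y j ((i:ℤ)+1) ω) μ h := by
      have hfun : SNsum Y R L = ∑ j ∈ Finset.range (R L),
          (fun ω => ∑ i ∈ Finset.range L, Y j ((i:ℤ)+1) ω) := by
        funext ω
        rw [Finset.sum_apply]
        rfl
      rw [hfun, hrows.mgf_sum (fun j => Finset.measurable_sum _ (fun i _ => hmeas j _))]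
    have hrowle : ∀ j, mgf (fun ω => ∑ i ∈ Finset.range L, Y j ((i:ℤ)+1) ω) μ h
        ≤ X ^ ((L:ℝ)/(g:ℝ)) := by
      intro j
      rw [hXexpr]
      exact row_mgf_bound μ (Y j) φ α (hmeas j) (h01 j) (hmix j) hφ0 (hmarg j) hα.le
        L g hg1' h hhpos.le
    have hprodle : ∏ j ∈ Finset.range (R L),
        mgf (fun ω => ∑ i ∈ Finset.range L, Y j ((i:ℤ)+1) ω) μ h
          ≤ (X ^ ((L:ℝ)/(g:ℝ)))^(R L) := by
      calc ∏ j ∈ Finset.range (R L), mgf (fun ω => ∑ i ∈ Finset.range L, Y j ((i:ℤ)+1) ω) μ h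
          ≤ ∏ _j ∈ Finset.range (R L), X ^ ((L:ℝ)/(g:ℝ)) :=
            Finset.prod_le_prod (fun j _ => mgf_nonneg) (fun j _ => hrowle j)
        _ = (X ^ ((L:ℝ)/(g:ℝ)))^(R L) := by rw [Finset.prod_const, Finset.card_range]
    have hcomb : (X ^ ((L:ℝ)/(g:ℝ)))^(R L) = Real.exp (((N:ℝ)/(g:ℝ)) * Real.log X) := by
      rw [← Real.rpow_natCast (X ^ ((L:ℝ)/(g:ℝ))) (R L), ← Real.rpow_mul hXpos.le,
        Real.rpow_def_of_pos hXpos]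
      congr 1
      rw [hN_RL]
      field_simp
    -- the exponent inequality
    have hlogL0 : 0 ≤ Real.log L := Real.log_nonneg hL1
    have hNh2 : (N:ℝ) * h^2 = t^2/(4*β^2) := by
      rw [hhval, ← hsq]
      field_simp
      ring
    have hNh : (N:ℝ) * h = sN L * t/(2*β) := by
      rw [hhval, ← hsq]
      field_simp
    have hhsN : h * sN L = t/(2*β) := by
      rw [hhval]
      field_simp
    have hsNL : sN L ≤ (L:ℝ) := by
      rw [hsNval]
      calc Real.sqrt N ≤ Real.sqrt ((L:ℝ)^2) := by
            refine Real.sqrt_le_sqrt ?_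
            rw [hN_RL]
            calc (R L : ℝ) * L ≤ (L:ℝ) * L := mul_le_mul_of_nonneg_right hRL' hLpos.le
              _ = (L:ℝ)^2 := by ring
        _ = (L:ℝ) := Real.sqrt_sq hLpos.le
    have hφgle : φ g ≤ K / L := by
      have h1 : φ g ≤ K * Real.exp (-(t*g)) := hφK g
      have h2 : Real.exp (-(t*(g:ℝ))) ≤ 1/(L:ℝ) := by
        have h3 : Real.log L ≤ t * g := by
          have h4 := hglb'
          rw [div_le_iff₀ ht0] at h4
          linarith only [h4]
        have h5 : Real.exp (-(t*(g:ℝ))) ≤ Real.exp (-(Real.log L)) :=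
          Real.exp_le_exp.mpr (by linarith only [h3])
        have h6 : Real.exp (-(Real.log L)) = 1/(L:ℝ) := by
          rw [Real.exp_neg, Real.exp_log hLpos, one_div]
        exact le_of_le_of_eq h5 h6
      calc φ g ≤ K * Real.exp (-(t*g)) := h1
        _ ≤ K * (1/(L:ℝ)) := mul_le_mul_of_nonneg_left h2 hK0
        _ = K / L := by ring
    have hXlog : Real.log X ≤ α*x + β*x^2/2 + 9*x^3 + c * φ g := by
      have hprod : 0 ≤ (c*α)*(c*(φ g)) :=
        mul_nonneg (mul_nonneg hc0 hα.le) (mul_nonneg hc0 (hφ0 g))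
      have hXle : X ≤ (1 + c*α) * (1 + c*(φ g)) := by
        rw [hXdef, hqdef]
        have hexpand : (1 + c*α) * (1 + c*(φ g)) = 1 + (c*α + c*(φ g)) + (c*α)*(c*(φ g)) := by
          ring
        have hdistr : c*(α + φ g) = c*α + c*(φ g) := by ring
        rw [hexpand, hdistr]
        linarith only [hprod]
      have h1cα : 0 < 1 + c*α := by linarith only [mul_nonneg hc0 hα.le]
      have h1cφ : 0 < 1 + c*(φ g) := by linarith only [mul_nonneg hc0 (hφ0 g)]
      have hb : Real.log (1 + c*α) ≤ α*x + α*(1-α)*x^2/2 + 9*x^3 := by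
        have hbb := log_bernoulli_mgf_bound hα hα1 hx0 hx1
        rw [hc_exp, mul_comm (Real.exp x - 1) α]
        exact hbb
      have hl2 : Real.log (1 + c*(φ g)) ≤ c*(φ g) := by
        linarith only [Real.log_le_sub_one_of_pos h1cφ]
      calc Real.log X ≤ Real.log ((1+c*α)*(1+c*(φ g))) :=
            Real.log_le_log hXpos hXle
        _ = Real.log (1+c*α) + Real.log (1+c*(φ g)) :=
            Real.log_mul (ne_of_gt h1cα) (ne_of_gt h1cφ)
        _ ≤ α*x + β*x^2/2 + 9*x^3 + c * φ g := by
            rw [hβdef]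
            linarith only [hb, hl2]
    have hexp_ineq : -h*a + ((N:ℝ)/(g:ℝ)) * Real.log X ≤ -(1-t/4) * Real.log L / β := by
      have hND : 0 ≤ (N:ℝ)/(g:ℝ) := by positivity
      have hD : ((N:ℝ)/(g:ℝ)) * (g:ℝ) = (N:ℝ) := div_mul_cancel₀ _ hgne
      have i1 : ((N:ℝ)/(g:ℝ)) * (α*x) = (N:ℝ)*α*h := by
        rw [hxdef]; linear_combination (α*h) * hD
      have i2 : ((N:ℝ)/(g:ℝ)) * (β*x^2/2) = β*(g:ℝ)*((N:ℝ)*h^2)/2 := by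
        rw [hxdef]; linear_combination (β*(g:ℝ)*h^2/2) * hD
      have i2' : β*(g:ℝ)*((N:ℝ)*h^2)/2 = (g:ℝ)*(t^2/(8*β)) := by
        rw [hNh2]; field_simp; ring
      have i3 : ((N:ℝ)/(g:ℝ)) * (9*x^3) = 9*((g:ℝ)^2*h)*((N:ℝ)*h^2) := by
        rw [hxdef]; linear_combination (9*(g:ℝ)^2*h^3) * hD
      have i3' : 9*((g:ℝ)^2*h)*((N:ℝ)*h^2) = 9*((g:ℝ)^2*h)*(t^2/(4*β^2)) := by
        rw [hNh2]
      have i4 : ((N:ℝ)/(g:ℝ)) * (c * φ g) ≤ sN L * (t/β) * φ g := by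
        have hb1 : ((N:ℝ)/(g:ℝ)) * (c * φ g) ≤ ((N:ℝ)/(g:ℝ)) * ((2*x) * φ g) :=
          mul_le_mul_of_nonneg_left (mul_le_mul_of_nonneg_right hc2x (hφ0 g)) hND
        have hb2 : ((N:ℝ)/(g:ℝ)) * ((2*x) * φ g) = 2*((N:ℝ)*h) * φ g := by
          rw [hxdef]; linear_combination (2*h*(φ g)) * hD
        have hb3 : 2*((N:ℝ)*h) * φ g = sN L * (t/β) * φ g := by
          rw [hNh]; field_simp
        calc ((N:ℝ)/(g:ℝ)) * (c * φ g) ≤ ((N:ℝ)/(g:ℝ)) * ((2*x) * φ g) := hb1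
          _ = 2*((N:ℝ)*h) * φ g := hb2
          _ = sN L * (t/β) * φ g := hb3
      have i5 : -h*a = -((N:ℝ)*α*h) - Real.log L / β := by
        have h6 : h * ((2/t) * sN L * Real.log L) = Real.log L / β := by
          rw [show h * ((2/t) * sN L * Real.log L) = (h * sN L) * ((2/t) * Real.log L) by ring,
            hhsN]
          field_simp
        rw [hadef]
        linear_combination -h6
      have j2 : (g:ℝ)*(t^2/(8*β)) ≤ t/(8*β) * Real.log L + t^2/(8*β) := by
        have h7 := mul_le_mul_of_nonneg_right hgub' (by positivity : (0:ℝ) ≤ t^2/(8*β))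
        have h8 : (Real.log L / t + 1)*(t^2/(8*β)) = t/(8*β) * Real.log L + t^2/(8*β) := by
          field_simp
        linarith only [h7, h8]
      have j3 : 9*((g:ℝ)^2*h)*(t^2/(4*β^2)) ≤ 9*t^2/(4*β^2) := by
        have h9 := mul_le_mul_of_nonneg_right hg2h (by positivity : (0:ℝ) ≤ t^2/(4*β^2))
        calc 9*((g:ℝ)^2*h)*(t^2/(4*β^2)) = 9*(((g:ℝ)^2*h)*(t^2/(4*β^2))) := by ring
          _ ≤ 9*(1*(t^2/(4*β^2))) := by linarith only [h9]
          _ = 9*t^2/(4*β^2) := by ring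
      have j4 : sN L * (t/β) * φ g ≤ t*K/β := by
        have hb1 : sN L * φ g ≤ (L:ℝ) * (K/L) :=
          mul_le_mul hsNL hφgle (hφ0 g) hLpos.le
        have hb2 : (L:ℝ) * (K/L) = K := by field_simp
        have hb3 : sN L * (t/β) * φ g = (sN L * φ g) * (t/β) := by ring
        have hb4 : (sN L * φ g) * (t/β) ≤ K * (t/β) := by
          refine mul_le_mul_of_nonneg_right ?_ (by positivity)
          linarith only [hb1, hb2.symm.le, hb2.le]
        have hb5 : K * (t/β) = t*K/β := by ring
        linarith only [hb3.le, hb4, hb5.le]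
      have hid : -(1-t/4) * Real.log L / β
          = -(Real.log L / β) + t/(8*β) * Real.log L + t/(8*β) * Real.log L := by
        field_simp
        ring
      have hmul := mul_le_mul_of_nonneg_left hXlog hND
      rw [mul_add, mul_add, mul_add, i1, i2, i3] at hmul
      have hfinal : ((N:ℝ)/(g:ℝ)) * Real.log X
          ≤ (N:ℝ)*α*h + (t/(8*β) * Real.log L + t^2/(8*β)) + 9*t^2/(4*β^2) + t*K/β := by
        linarith only [hmul, i2', i3', i4, j2, j3, j4]
      rw [i5, hid]
      linarith only [hP4, hfinal]
    -- put everything together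
    have hsub : {ω | (N : ℝ) * α + (2 / t) * (N : ℝ) ^ ((1 : ℝ) / 2) * Real.log L <
        SNsum Y R L ω} ⊆ {ω | a ≤ SNsum Y R L ω} := by
      intro ω hω
      simp only [Set.mem_setOf_eq] at hω ⊢
      rw [hadef]
      rw [hevrw] at hω
      exact le_of_lt hω
    calc (μ {ω | (N : ℝ) * α + (2 / t) * (N : ℝ) ^ ((1 : ℝ) / 2) * Real.log L <
            SNsum Y R L ω}).toReal
        ≤ (μ {ω | a ≤ SNsum Y R L ω}).toReal :=
          ENNReal.toReal_mono (measure_ne_top μ _) (measure_mono hsub)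
      _ ≤ Real.exp (-h*a) * mgf (SNsum Y R L) μ h := hcher
      _ ≤ Real.exp (-h*a) * Real.exp (((N:ℝ)/(g:ℝ)) * Real.log X) := by
          refine mul_le_mul_of_nonneg_left ?_ (Real.exp_pos _).le
          rw [hmgfsum, ← hcomb]
          exact hprodle
      _ = Real.exp (-h*a + ((N:ℝ)/(g:ℝ)) * Real.log X) := by rw [← Real.exp_add]
      _ ≤ Real.exp (-(1-t/4) * Real.log L / β) := Real.exp_le_exp.mpr hexp_ineq
  refine ⟨?_, fun _ => 0, tendsto_const_nhds, ?_, 1, ?_⟩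
  · rw [lt_div_iff₀ hβ]
    nlinarith
  · filter_upwards [key] with L hL
    simpa using hL
  · filter_upwards [key, eventually_ge_atTop 1] with L hL hL1
    have hLpos : (0:ℝ) < L := by exact_mod_cast (by omega : 0 < L)
    have hrw : (L:ℝ) ^ (-((1 - t / 4) / β)) = Real.exp (-(1-t/4) * Real.log L / β) := by
      rw [Real.rpow_def_of_pos hLpos]
      congr 1
      field_simp
    rw [one_mul, hrw]
    exact hL


end
end

section
/- Let {Y_i} be a stationary {0,1}-valued φ-mixing sequence with P(Y_i = 1) = α. Then for every λ > 0, every gap size n ≥ 1, and every M ≥ 0, the moment generating function of the sparse sum S^{(1)} = Y_1 + Y_{1+n} + Y_{1+2n} + ⋯ + Y_{1+Mn} satisfies E[ exp(λ S^{(1)}) ] ≤ { 1 + (α + φ(n)) (e^{λ} − 1) }^{M+1}. -/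
open MeasureTheory ProbabilityTheory Filter Set

noncomputable section

section Aux

variable {Ω : Type*} [MeasurableSpace Ω] {μ : Measure Ω} [IsProbabilityMeasure μ]
  {Y : ℤ → Ω → ℝ} {φ : ℕ → ℝ}

lemma sigPast_le (hmeas : ∀ i, Measurable (Y i)) (k : ℤ) :
    sigPast Y k ≤ ‹MeasurableSpace Ω› := by
  refine iSup_le fun i => iSup_le fun _ => ?_
  exact (hmeas i).comap_le

lemma sigFuture_le (hmeas : ∀ i, Measurable (Y i)) (k : ℤ) :
    sigFuture Y k ≤ ‹MeasurableSpace Ω› := by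
  refine iSup_le fun i => iSup_le fun _ => ?_
  exact (hmeas i).comap_le

lemma meas_one_past {i k : ℤ} (hik : i ≤ k) :
    MeasurableSet[sigPast Y k] {ω | Y i ω = 1} := by
  have h : MeasurableSet[MeasurableSpace.comap (Y i) inferInstance] {ω | Y i ω = 1} :=
    ⟨{1}, measurableSet_singleton 1, rfl⟩
  exact le_iSup₂ (f := fun i (_ : i ∈ Set.Iic k) =>
    MeasurableSpace.comap (Y i) inferInstance) i hik _ h

lemma meas_one_future {i k : ℤ} (hik : k ≤ i) :
    MeasurableSet[sigFuture Y k] {ω | Y i ω = 1} := by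
  have h : MeasurableSet[MeasurableSpace.comap (Y i) inferInstance] {ω | Y i ω = 1} :=
    ⟨{1}, measurableSet_singleton 1, rfl⟩
  exact le_iSup₂ (f := fun i (_ : i ∈ Set.Ici k) =>
    MeasurableSpace.comap (Y i) inferInstance) i hik _ h

/-- Key expansion + mixing bound. -/
lemma key_bound
    (hmeas : ∀ i, Measurable (Y i))
    (h01 : ∀ i ω, Y i ω = 0 ∨ Y i ω = 1)
    (hmix : PhiMixing μ Y φ) (hφ0 : ∀ n, 0 ≤ φ n)
    {c : ℝ} (hc : 0 ≤ c) {n : ℕ} (hn : 1 ≤ n) (k : ℤ)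
    (s : Finset ℕ) (hs : ∀ m ∈ s, 1 + (m : ℤ) * n ≤ k)
    (E : Set Ω) (hE : MeasurableSet[sigFuture Y (k + n)] E) :
    ∫ ω, (∏ m ∈ s, (1 + c * Y (1 + (m : ℤ) * n) ω)) * E.indicator 1 ω ∂μ
      ≤ ((μ E).toReal + φ n) * ∫ ω, ∏ m ∈ s, (1 + c * Y (1 + (m : ℤ) * n) ω) ∂μ := by
  set A : Finset ℕ → Set Ω := fun t => ⋂ m ∈ t, {ω | Y (1 + (m : ℤ) * n) ω = 1} with hA
  have hApast : ∀ t ∈ s.powerset, MeasurableSet[sigPast Y k] (A t) := by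
    intro t ht
    refine MeasurableSet.biInter (t : Set ℕ).to_countable fun m hm => ?_
    exact meas_one_past (hs m (Finset.mem_powerset.mp ht hm))
  have hEmeas : MeasurableSet E := sigFuture_le hmeas (k + n) _ hE
  have hAmeas : ∀ t ∈ s.powerset, MeasurableSet (A t) := fun t ht =>
    sigPast_le hmeas k _ (hApast t ht)
  -- pointwise expansion of the product
  have hprod : ∀ ω, ∏ m ∈ s, (1 + c * Y (1 + (m : ℤ) * n) ω)
      = ∑ t ∈ s.powerset, (A t).indicator (fun _ => c ^ t.card) ω := by
    intro ω
    have h1 : ∀ m ∈ s, (1 : ℝ) + c * Y (1 + (m : ℤ) * n) ω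
        = c * Y (1 + (m : ℤ) * n) ω + 1 := fun m _ => by ring
    rw [Finset.prod_congr rfl h1, Finset.prod_add]
    refine Finset.sum_congr rfl fun t ht => ?_
    rw [Finset.prod_const_one, mul_one, Finset.prod_mul_distrib, Finset.prod_const]
    by_cases hall : ∀ m ∈ t, Y (1 + (m : ℤ) * n) ω = 1
    · have hωA : ω ∈ A t := Set.mem_iInter₂.mpr fun m hm => hall m hm
      rw [Finset.prod_congr rfl hall, Finset.prod_const_one, mul_one,
        Set.indicator_of_mem hωA]
    · push_neg at hall
      obtain ⟨m, hm, hm1⟩ := hall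
      have hm0 : Y (1 + (m : ℤ) * n) ω = 0 := (h01 _ ω).resolve_right hm1
      have hωA : ω ∉ A t := by
        intro hωA
        exact hm1 (Set.mem_iInter₂.mp hωA m hm)
      rw [Finset.prod_eq_zero hm hm0, mul_zero, Set.indicator_of_notMem hωA]
  -- pointwise expansion of the product times the indicator
  have hprodE : ∀ ω, (∏ m ∈ s, (1 + c * Y (1 + (m : ℤ) * n) ω)) * E.indicator 1 ω
      = ∑ t ∈ s.powerset, (A t ∩ E).indicator (fun _ => c ^ t.card) ω := by
    intro ω
    rw [hprod ω, Finset.sum_mul]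
    refine Finset.sum_congr rfl fun t ht => ?_
    have := Set.inter_indicator_mul (s := A t) (t := E)
      (fun _ => c ^ t.card) (1 : Ω → ℝ) ω
    simpa using this.symm
  -- integrals
  have hint1 : ∫ ω, ∏ m ∈ s, (1 + c * Y (1 + (m : ℤ) * n) ω) ∂μ
      = ∑ t ∈ s.powerset, c ^ t.card * (μ (A t)).toReal := by
    rw [integral_congr_ae (Filter.Eventually.of_forall hprod),
      integral_finset_sum _ (fun t ht => (integrable_const _).indicator (hAmeas t ht))]
    refine Finset.sum_congr rfl fun t ht => ?_
    rw [integral_indicator_const _ (hAmeas t ht), smul_eq_mul, mul_comm]; rfl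
  have hint2 : ∫ ω, (∏ m ∈ s, (1 + c * Y (1 + (m : ℤ) * n) ω)) * E.indicator 1 ω ∂μ
      = ∑ t ∈ s.powerset, c ^ t.card * (μ (A t ∩ E)).toReal := by
    rw [integral_congr_ae (Filter.Eventually.of_forall hprodE),
      integral_finset_sum _
        (fun t ht => (integrable_const _).indicator ((hAmeas t ht).inter hEmeas))]
    refine Finset.sum_congr rfl fun t ht => ?_
    rw [integral_indicator_const _ ((hAmeas t ht).inter hEmeas), smul_eq_mul, mul_comm]; rfl
  -- per-set mixing bound
  have hAE : ∀ t ∈ s.powerset,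
      (μ (A t ∩ E)).toReal ≤ ((μ E).toReal + φ n) * (μ (A t)).toReal := by
    intro t ht
    by_cases h0 : μ (A t) = 0
    · have hz : μ (A t ∩ E) = 0 :=
        measure_mono_null Set.inter_subset_left h0
      rw [hz, h0]
      simp
    · have hpos : 0 < μ (A t) := lt_of_le_of_ne zero_le (Ne.symm h0)
      have habs := hmix k n hn (A t) (hApast t ht) E hE hpos
      have h2 := (abs_le.mp habs).2
      have htr : 0 < (μ (A t)).toReal :=
        ENNReal.toReal_pos h0 (measure_ne_top μ _)
      rw [sub_le_iff_le_add] at h2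
      have := (div_le_iff₀ htr).mp h2
      calc (μ (A t ∩ E)).toReal ≤ (φ n + (μ E).toReal) * (μ (A t)).toReal := this
        _ = ((μ E).toReal + φ n) * (μ (A t)).toReal := by ring
  rw [hint1, hint2, Finset.mul_sum]
  refine Finset.sum_le_sum fun t ht => ?_
  calc c ^ t.card * (μ (A t ∩ E)).toReal
      ≤ c ^ t.card * (((μ E).toReal + φ n) * (μ (A t)).toReal) :=
        mul_le_mul_of_nonneg_left (hAE t ht) (pow_nonneg hc _)
    _ = ((μ E).toReal + φ n) * (c ^ t.card * (μ (A t)).toReal) := by ring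

end Aux

theorem sparse_sum_mgf_bound'
    {Ω : Type*} [MeasurableSpace Ω] (μ : Measure Ω) [IsProbabilityMeasure μ]
    (Y : ℤ → Ω → ℝ) (φ : ℕ → ℝ) (α : ℝ)
    (hmeas : ∀ i, Measurable (Y i))
    (h01 : ∀ i ω, Y i ω = 0 ∨ Y i ω = 1)
    (hmix : PhiMixing μ Y φ)
    (hφ0 : ∀ n, 0 ≤ φ n)
    (hmarg : ∀ i, (μ {ω | Y i ω = 1}).toReal = α)
    (hα : 0 < α) :
    ∀ lam : ℝ, 0 < lam → ∀ n : ℕ, 1 ≤ n → ∀ M : ℕ,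
      ∫ ω, Real.exp (lam * ∑ m ∈ Finset.range (M + 1), Y (1 + (m : ℤ) * (n : ℤ)) ω) ∂μ ≤
        (1 + (α + φ n) * (Real.exp lam - 1)) ^ (M + 1) := by
  intro lam hlam n hn M
  set c : ℝ := Real.exp lam - 1 with hc_def
  have hc : 0 ≤ c := by
    have : (1 : ℝ) ≤ Real.exp lam := Real.one_le_exp hlam.le
    linarith
  set B : ℝ := 1 + (α + φ n) * c with hB_def
  -- pointwise identity : exp(lam * sum) = prod (1 + c Y)
  have hexp : ∀ (M : ℕ) (ω : Ω),
      Real.exp (lam * ∑ m ∈ Finset.range (M + 1), Y (1 + (m : ℤ) * (n : ℤ)) ω)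
      = ∏ m ∈ Finset.range (M + 1), (1 + c * Y (1 + (m : ℤ) * (n : ℤ)) ω) := by
    intro M ω
    rw [Finset.mul_sum, Real.exp_sum]
    refine Finset.prod_congr rfl fun m _ => ?_
    rcases h01 (1 + (m : ℤ) * n) ω with h | h <;> rw [h] <;> simp [hc_def]
  -- measurability and boundedness of the products
  have hmeasP : ∀ (M : ℕ), Measurable fun ω =>
      ∏ m ∈ Finset.range (M + 1), (1 + c * Y (1 + (m : ℤ) * (n : ℤ)) ω) := by
    intro M
    exact Finset.measurable_prod _ fun m _ =>
      (measurable_const.add ((hmeas _).const_mul c))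
  have hPnonneg : ∀ (M : ℕ) (ω : Ω),
      0 ≤ ∏ m ∈ Finset.range (M + 1), (1 + c * Y (1 + (m : ℤ) * (n : ℤ)) ω) := by
    intro M ω
    refine Finset.prod_nonneg fun m _ => ?_
    rcases h01 (1 + (m : ℤ) * n) ω with h | h <;> rw [h] <;> nlinarith
  have hPle : ∀ (M : ℕ) (ω : Ω),
      ∏ m ∈ Finset.range (M + 1), (1 + c * Y (1 + (m : ℤ) * (n : ℤ)) ω)
        ≤ (1 + c) ^ (M + 1) := by
    intro M ω
    calc ∏ m ∈ Finset.range (M + 1), (1 + c * Y (1 + (m : ℤ) * (n : ℤ)) ω)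
        ≤ ∏ _m ∈ Finset.range (M + 1), (1 + c) := by
          refine Finset.prod_le_prod (fun m _ => ?_) (fun m _ => ?_)
          · rcases h01 (1 + (m : ℤ) * n) ω with h | h <;> rw [h] <;> nlinarith
          · rcases h01 (1 + (m : ℤ) * n) ω with h | h <;> rw [h] <;> nlinarith
      _ = (1 + c) ^ (M + 1) := by rw [Finset.prod_const, Finset.card_range]
  have hintP : ∀ (M : ℕ), Integrable (fun ω =>
      ∏ m ∈ Finset.range (M + 1), (1 + c * Y (1 + (m : ℤ) * (n : ℤ)) ω)) μ := by
    intro M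
    refine (integrable_const ((1 + c) ^ (M + 1))).mono'
      (hmeasP M).aestronglyMeasurable
      (Filter.Eventually.of_forall fun ω => ?_)
    rw [Real.norm_eq_abs, abs_of_nonneg (hPnonneg M ω)]
    exact hPle M ω
  -- main induction
  have key : ∀ M : ℕ,
      ∫ ω, ∏ m ∈ Finset.range (M + 1), (1 + c * Y (1 + (m : ℤ) * (n : ℤ)) ω) ∂μ
        ≤ B ^ (M + 1) := by
    intro M
    induction M with
    | zero =>
      have h1 : ∀ ω : Ω,
          ∏ m ∈ Finset.range 1, (1 + c * Y (1 + (m : ℤ) * (n : ℤ)) ω)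
          = 1 + c * ({ω | Y (1 + ((0 : ℕ) : ℤ) * n) ω = 1}).indicator (fun _ => (1:ℝ)) ω := by
        intro ω
        rw [Finset.prod_range_one]
        congr 1
        congr 1
        rcases h01 (1 + ((0 : ℕ) : ℤ) * n) ω with h | h
        · rw [h, Set.indicator_of_notMem]
          intro hmem
          rw [Set.mem_setOf_eq, h] at hmem
          norm_num at hmem
        · rw [h, Set.indicator_of_mem]
          exact h
      have hE0 : MeasurableSet {ω | Y (1 + ((0 : ℕ) : ℤ) * n) ω = 1} :=
        (hmeas _) (measurableSet_singleton 1)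
      rw [integral_congr_ae (Filter.Eventually.of_forall h1)]
      rw [integral_add (integrable_const 1)
        (((integrable_const _).indicator hE0).const_mul c)]
      rw [integral_const_mul, integral_indicator_const _ hE0]
      simp only [integral_const, Measure.real, measure_univ, ENNReal.toReal_one, one_smul, smul_eq_mul,
        mul_one]
      rw [hmarg (1 + ((0 : ℕ) : ℤ) * n)]
      have hφn := hφ0 n
      calc (1 : ℝ) + c * α ≤ 1 + (α + φ n) * c := by nlinarith
        _ = B ^ (0 + 1) := by rw [pow_one]
    | succ M ih =>
      set j : ℤ := 1 + ((M : ℤ) + 1) * n with hj_def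
      set E : Set Ω := {ω | Y j ω = 1} with hE_def
      have hEα : (μ E).toReal = α := hmarg j
      have hEmeas : MeasurableSet E := (hmeas _) (measurableSet_singleton 1)
      -- Y j = indicator of E
      have hYj : ∀ ω, Y j ω = E.indicator (1 : Ω → ℝ) ω := by
        intro ω
        by_cases hω : ω ∈ E
        · rw [Set.indicator_of_mem hω]
          exact hω
        · rw [Set.indicator_of_notMem hω]
          exact (h01 j ω).resolve_right hω
      have hsplit : ∀ ω : Ω,
          ∏ m ∈ Finset.range (M + 1 + 1), (1 + c * Y (1 + (m : ℤ) * (n : ℤ)) ω)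
          = (∏ m ∈ Finset.range (M + 1), (1 + c * Y (1 + (m : ℤ) * (n : ℤ)) ω))
            + c * ((∏ m ∈ Finset.range (M + 1), (1 + c * Y (1 + (m : ℤ) * (n : ℤ)) ω))
                * E.indicator 1 ω) := by
        intro ω
        rw [Finset.prod_range_succ]
        have : ((M + 1 : ℕ) : ℤ) = (M : ℤ) + 1 := by push_cast; ring
        rw [this, ← hYj ω]
        ring
      -- integrability of product * indicator
      have hintPE : Integrable (fun ω =>
          (∏ m ∈ Finset.range (M + 1), (1 + c * Y (1 + (m : ℤ) * (n : ℤ)) ω))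
            * E.indicator 1 ω) μ := by
        refine (integrable_const ((1 + c) ^ (M + 1))).mono'
          (((hmeasP M).mul (measurable_const.indicator hEmeas)).aestronglyMeasurable)
          (Filter.Eventually.of_forall fun ω => ?_)
        rw [Real.norm_eq_abs]
        by_cases hω : ω ∈ E
        · rw [Set.indicator_of_mem hω]
          simp only [Pi.one_apply, mul_one]
          rw [abs_of_nonneg (hPnonneg M ω)]
          exact hPle M ω
        · rw [Set.indicator_of_notMem hω, mul_zero, abs_zero]
          exact pow_nonneg (by linarith) _
      -- the mixing bound
      have hEfut : MeasurableSet[sigFuture Y ((1 + (M : ℤ) * n) + n)] E := by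
        have hj' : (1 + (M : ℤ) * n) + n ≤ j := by
          rw [hj_def]; ring_nf; omega
        exact meas_one_future hj'
      have hkb := key_bound (μ := μ) hmeas h01 hmix hφ0 hc hn (1 + (M : ℤ) * n)
        (Finset.range (M + 1))
        (fun m hm => by
          have hm' : m ≤ M := Nat.lt_succ_iff.mp (Finset.mem_range.mp hm)
          have : (m : ℤ) ≤ (M : ℤ) := by exact_mod_cast hm'
          have hn0 : (0 : ℤ) ≤ (n : ℤ) := Int.natCast_nonneg n
          nlinarith)
        E hEfut
      rw [hEα] at hkb
      -- put it together
      rw [integral_congr_ae (Filter.Eventually.of_forall hsplit),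
        integral_add (hintP M) (hintPE.const_mul c), integral_const_mul]
      have hInonneg : 0 ≤ ∫ ω,
          ∏ m ∈ Finset.range (M + 1), (1 + c * Y (1 + (m : ℤ) * (n : ℤ)) ω) ∂μ :=
        integral_nonneg (hPnonneg M)
      have hBnn : (0 : ℝ) ≤ α + φ n := by have := hφ0 n; linarith
      calc (∫ ω, ∏ m ∈ Finset.range (M + 1), (1 + c * Y (1 + (m : ℤ) * (n : ℤ)) ω) ∂μ)
            + c * ∫ ω, (∏ m ∈ Finset.range (M + 1),
                (1 + c * Y (1 + (m : ℤ) * (n : ℤ)) ω)) * E.indicator 1 ω ∂μ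
          ≤ (∫ ω, ∏ m ∈ Finset.range (M + 1), (1 + c * Y (1 + (m : ℤ) * (n : ℤ)) ω) ∂μ)
            + c * ((α + φ n) *
              ∫ ω, ∏ m ∈ Finset.range (M + 1), (1 + c * Y (1 + (m : ℤ) * (n : ℤ)) ω) ∂μ) :=
            by nlinarith [mul_le_mul_of_nonneg_left hkb hc]
        _ = B * ∫ ω, ∏ m ∈ Finset.range (M + 1), (1 + c * Y (1 + (m : ℤ) * (n : ℤ)) ω) ∂μ :=
            by rw [hB_def]; ring
        _ ≤ B * B ^ (M + 1) := by
            have hB0 : 0 ≤ B := by rw [hB_def]; nlinarith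
            exact mul_le_mul_of_nonneg_left ih hB0
        _ = B ^ (M + 1 + 1) := by ring
  calc ∫ ω, Real.exp (lam * ∑ m ∈ Finset.range (M + 1), Y (1 + (m : ℤ) * (n : ℤ)) ω) ∂μ
      = ∫ ω, ∏ m ∈ Finset.range (M + 1), (1 + c * Y (1 + (m : ℤ) * (n : ℤ)) ω) ∂μ :=
        integral_congr_ae (Filter.Eventually.of_forall (hexp M))
    _ ≤ B ^ (M + 1) := key M
    _ = (1 + (α + φ n) * (Real.exp lam - 1)) ^ (M + 1) := by rw [hB_def, hc_def]


/-- **MGF bound for a sparse subsequence (inequality (20)).** For a stationary {0,1}-valued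
φ-mixing sequence with `P(Y_i = 1) = α`: for every `λ > 0`, gap `n ≥ 1`, and `M ≥ 0`, the
sparse sum `S^{(1)} = Y_1 + Y_{1+n} + ⋯ + Y_{1+Mn}` satisfies
`E[exp(λ S^{(1)})] ≤ (1 + (α + φ(n))(e^λ − 1))^{M+1}`. -/
theorem sparse_sum_mgf_bound
    {Ω : Type*} [MeasurableSpace Ω] (μ : Measure Ω) [IsProbabilityMeasure μ]
    (Y : ℤ → Ω → ℝ) (φ : ℕ → ℝ) (α : ℝ)
    -- the `Y_i` are measurable and {0,1}-valued
    (hmeas : ∀ i, Measurable (Y i))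
    (h01 : ∀ i ω, Y i ω = 0 ∨ Y i ω = 1)
    -- stationarity
    (hstat : Stationary μ Y)
    -- φ-mixing with coefficients `1 ≥ φ(1) ≥ φ(2) ≥ ⋯ ≥ 0`, `φ(n) → 0`
    (hmix : PhiMixing μ Y φ)
    (hφ0 : ∀ n, 0 ≤ φ n) (hφ1 : ∀ n, φ n ≤ 1) (hφmono : ∀ n, φ (n + 1) ≤ φ n)
    (hφlim : Tendsto φ atTop (nhds 0))
    -- common marginal distribution `P(Y_i = 1) = α`
    (hmarg : ∀ i, (μ {ω | Y i ω = 1}).toReal = α)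
    (hα : 0 < α) (hα1 : α < 1)
     :
    ∀ lam : ℝ, 0 < lam → ∀ n : ℕ, 1 ≤ n → ∀ M : ℕ,
      ∫ ω, Real.exp (lam * ∑ m ∈ Finset.range (M + 1), Y (1 + (m : ℤ) * (n : ℤ)) ω) ∂μ ≤
        (1 + (α + φ n) * (Real.exp lam - 1)) ^ (M + 1) :=
  sparse_sum_mgf_bound' μ Y φ α hmeas h01 hmix hφ0 hmarg hα

end
end
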